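/- Let α_N, N ∈ ℕ, be positive integers with ∑_{n=α_N}^∞ n^{1+n/2}·N^n/n! < 1/N, and let f(z) = ∑_{n∈B} c_n z^n/n! with 0 ≤ c_n ≤ n, where B ⊆ ℕ satisfies B ∩ [α_N, 2α_N²) = ∅ for all N. Then for every m ∈ ℕ and ε > 0, there exists j₀ such that for all j with α_N ≤ j ≤ α_N² for some N ≥ max(m, ⌈1/ε⌉), sup_{|z|≤m}|f^{(j)}(z)| < ε. -/

import Mathlib

open Filter Metric

/-- The sup of `‖f‖` over the closed ball of radius `m` centered at `0`. -/
noncomputable def supD (f : ℂ → ℂ) (m : ℝ) : ℝ :=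
  sSup ((fun z => ‖f z‖) '' Metric.closedBall (0:ℂ) m)

lemma fact_le_pow_mul_fact (n k : ℕ) : (n + k).factorial ≤ (n + k) ^ k * n.factorial := by
  induction k with
  | zero => simp
  | succ k ih =>
    have h1 : n + (k+1) = (n+k) + 1 := by omega
    rw [h1, Nat.factorial_succ]
    calc (n+k+1) * (n+k).factorial ≤ (n+k+1) * ((n+k)^k * n.factorial) :=
          Nat.mul_le_mul_left _ ih
      _ ≤ (n+k+1) * ((n+k+1)^k * n.factorial) := by
          have : (n+k)^k ≤ (n+k+1)^k := Nat.pow_le_pow_left (by omega) k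
          exact Nat.mul_le_mul_left _ (Nat.mul_le_mul_right _ this)
      _ = (n+k+1)^(k+1) * n.factorial := by ring

lemma sumSq (k : ℕ) (r : ℝ) (hr : 0 ≤ r) :
    Summable (fun n : ℕ => ((n : ℝ) + k)^2 * r ^ n / n.factorial) := by
  have h2r : Summable (fun n : ℕ => (2*r)^n / n.factorial) :=
    Real.summable_pow_div_factorial (2*r)
  obtain ⟨M, hM⟩ : ∃ M : ℝ, ∀ n : ℕ, (2*r)^n / n.factorial ≤ M := by
    obtain ⟨M, hM⟩ := h2r.tendsto_atTop_zero.bddAbove_range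
    exact ⟨M, fun n => hM (Set.mem_range_self n)⟩
  have h1 : Summable (fun n : ℕ => ((n:ℝ))^2 * (1/2:ℝ)^n) := by
    simpa using summable_pow_mul_geometric_of_norm_lt_one (R := ℝ) 2 (r := (1/2:ℝ)) (by norm_num)
  have h2 : Summable (fun n : ℕ => ((n:ℝ))^1 * (1/2:ℝ)^n) := by
    simpa using summable_pow_mul_geometric_of_norm_lt_one (R := ℝ) 1 (r := (1/2:ℝ)) (by norm_num)
  have h3 : Summable (fun n : ℕ => (1/2:ℝ)^n) := summable_geometric_of_lt_one (by norm_num) (by norm_num)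
  have hgeo : Summable (fun n : ℕ => ((n:ℝ)+k)^2 * (1/2:ℝ)^n) := by
    have := (h1.add ((h2.mul_left (2*(k:ℝ))).add (h3.mul_left ((k:ℝ)^2))))
    apply this.congr
    intro n; ring
  apply Summable.of_nonneg_of_le (fun n => by positivity) _ (hgeo.mul_right M)
  intro n
  have key : ((n : ℝ) + k)^2 * r ^ n / n.factorial
      = (((n:ℝ)+k)^2 * (1/2:ℝ)^n) * ((2*r)^n / n.factorial) := by
    rw [mul_pow]
    have h : (1/2:ℝ)^n * 2^n = 1 := by rw [← mul_pow]; norm_num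
    field_simp
    linear_combination (-((n:ℝ) * k * r ^ n * 2 + (n:ℝ) ^ 2 * r ^ n + (k:ℝ) ^ 2 * r ^ n)) * h
  rw [key]
  have hnn : (0:ℝ) ≤ ((n:ℝ)+k)^2 * (1/2:ℝ)^n := by positivity
  exact mul_le_mul_of_nonneg_left (hM n) hnn

lemma sum1 (k : ℕ) (r : ℝ) (hr : 0 ≤ r) :
    Summable (fun n : ℕ => ((n : ℝ) + k) * r ^ n / n.factorial) := by
  apply Summable.of_nonneg_of_le (fun n => by positivity) _ (sumSq k r hr)
  intro n
  have : ((n : ℝ) + k) ≤ ((n : ℝ) + k)^2 := by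
    have h := Nat.le_self_pow (two_ne_zero) (n + k)
    have h2 : ((n + k : ℕ) : ℝ) ≤ (((n+k)^2 : ℕ) : ℝ) := by exact_mod_cast h
    push_cast at h2
    linarith
  gcongr

lemma sum2 (k : ℕ) (r : ℝ) (hr : 0 ≤ r) :
    Summable (fun n : ℕ => ((n : ℝ) + k) * n * r ^ n / n.factorial) := by
  apply Summable.of_nonneg_of_le (fun n => by positivity) _ (sumSq k r hr)
  intro n
  have : ((n : ℝ) + k) * n ≤ ((n : ℝ) + k)^2 := by nlinarith [Nat.cast_nonneg (α := ℝ) n, Nat.cast_nonneg (α := ℝ) k]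
  gcongr

lemma summable_T (X : ℝ) (hX : 1 ≤ X) :
    Summable (fun ν : ℕ => (ν:ℝ) ^ (1 + (ν:ℝ)/2) * X ^ ν / (ν.factorial : ℝ)) := by
  apply summable_of_ratio_norm_eventually_le (r := 1/2) (by norm_num)
  obtain ⟨M, hM⟩ := exists_nat_ge (144 * X^2)
  filter_upwards [eventually_ge_atTop (max M 1)] with ν hν
  have hν1 : (1:ℕ) ≤ ν := le_trans (le_max_right _ _) hν
  have hνM : (M:ℝ) ≤ (ν:ℝ) := by exact_mod_cast le_trans (le_max_left _ _) hν
  set x : ℝ := (ν:ℝ) with hx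
  have hx1 : (1:ℝ) ≤ x := by rw [hx]; exact_mod_cast hν1
  have hx0 : (0:ℝ) < x := by linarith
  have hxX : 144 * X^2 ≤ x := le_trans hM hνM
  have hX0 : (0:ℝ) < X := by linarith
  -- positivity of pieces
  have hfact : (0:ℝ) < (ν.factorial : ℝ) := by exact_mod_cast ν.factorial_pos
  have hTν : (0:ℝ) ≤ (ν:ℝ) ^ (1 + (ν:ℝ)/2) * X ^ ν / (ν.factorial : ℝ) := by positivity
  have hTν1 : (0:ℝ) ≤ ((ν+1:ℕ):ℝ) ^ (1 + ((ν+1:ℕ):ℝ)/2) * X ^ (ν+1) / ((ν+1).factorial : ℝ) := by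
    positivity
  rw [Real.norm_of_nonneg hTν1, Real.norm_of_nonneg hTν]
  -- key analytic estimate:  (x+1)^((x+1)/2) ≤ x^(x/2) * exp (1/2) * (x+1)^(1/2)
  have key1 : (x+1) ^ ((x+1)/2) ≤ x ^ (x/2) * Real.exp (1/2) * (x+1) ^ ((1:ℝ)/2) := by
    have e1 : (x+1) ^ ((x+1)/2) = (x+1) ^ (x/2) * (x+1) ^ ((1:ℝ)/2) := by
      rw [← Real.rpow_add (by linarith)]
      ring_nf
    rw [e1]
    have e2 : (x+1) ^ (x/2) ≤ x ^ (x/2) * Real.exp (1/2) := by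
      have h1 : x + 1 ≤ x * Real.exp (1/x) := by
        have := Real.add_one_le_exp (1/x)
        calc x + 1 = x * (1 + 1/x) := by field_simp
          _ ≤ x * Real.exp (1/x) := by
              apply mul_le_mul_of_nonneg_left _ (le_of_lt hx0)
              linarith [Real.add_one_le_exp (1/x)]
      calc (x+1) ^ (x/2) ≤ (x * Real.exp (1/x)) ^ (x/2) := by
            apply Real.rpow_le_rpow (by linarith) h1 (by linarith)
        _ = x ^ (x/2) * (Real.exp (1/x)) ^ (x/2) := by
            rw [Real.mul_rpow (le_of_lt hx0) (le_of_lt (Real.exp_pos _))]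
        _ = x ^ (x/2) * Real.exp (1/2) := by
            rw [← Real.exp_mul]
            congr 1
            field_simp
    calc (x+1) ^ (x/2) * (x+1) ^ ((1:ℝ)/2)
        ≤ (x ^ (x/2) * Real.exp (1/2)) * (x+1) ^ ((1:ℝ)/2) := by
          apply mul_le_mul_of_nonneg_right e2 (Real.rpow_nonneg (by linarith) _)
      _ = x ^ (x/2) * Real.exp (1/2) * (x+1) ^ ((1:ℝ)/2) := by ring
  -- bound exp(1/2) ≤ 3 and sqrt bound:  exp(1/2) * (x+1)^(1/2) * X ≤ x/2
  have key2 : Real.exp (1/2) * (x+1) ^ ((1:ℝ)/2) * X ≤ x / 2 := by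
    have he : Real.exp (1/2) ≤ 3 := by
      have := Real.exp_one_lt_d9
      have h2 : Real.exp (1/2) ≤ Real.exp 1 := Real.exp_le_exp.2 (by norm_num)
      linarith
    have hs : (x+1) ^ ((1:ℝ)/2) = Real.sqrt (x+1) := (Real.sqrt_eq_rpow (x+1)).symm
    rw [hs]
    have hsq : Real.sqrt (x+1) ≤ x / (6*X) := by
      rw [show x / (6*X) = Real.sqrt ((x/(6*X))^2) from (Real.sqrt_sq (by positivity)).symm]
      apply Real.sqrt_le_sqrt
      rw [div_pow]
      rw [le_div_iff₀ (by positivity)]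
      nlinarith [sq_nonneg X, sq_nonneg (x - 144*X^2)]
    calc Real.exp (1/2) * Real.sqrt (x+1) * X ≤ 3 * (x / (6*X)) * X := by
          apply mul_le_mul_of_nonneg_right _ (le_of_lt hX0)
          apply mul_le_mul he hsq (Real.sqrt_nonneg _) (by norm_num)
      _ = x / 2 := by field_simp; ring
  -- now assemble
  have hfs : ((ν+1).factorial : ℝ) = (x+1) * (ν.factorial : ℝ) := by
    rw [Nat.factorial_succ]; push_cast; ring
  have hcast : ((ν+1:ℕ):ℝ) = x + 1 := by push_cast; ring
  rw [hcast, hfs]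
  have hrpow : (x+1) ^ (1 + (x+1)/2) = (x+1) * (x+1) ^ ((x+1)/2) := by
    rw [Real.rpow_add (by linarith), Real.rpow_one]
  have hrpow2 : x ^ (1 + x/2) = x * x ^ (x/2) := by
    rw [Real.rpow_add hx0, Real.rpow_one]
  rw [hrpow, hrpow2]
  rw [div_le_iff₀ (by positivity)]
  have expand : 1 / 2 * (x * x ^ (x / 2) * X ^ ν / ↑ν.factorial) * ((x + 1) * ↑ν.factorial)
      = (x+1) * ((x/2) * x ^ (x/2)) * X ^ ν := by
    field_simp
  rw [expand]
  have hXp : X ^ (ν+1) = X^ν * X := pow_succ X ν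
  calc (x + 1) * (x + 1) ^ ((x + 1) / 2) * X ^ (ν + 1)
      ≤ (x + 1) * (x ^ (x/2) * Real.exp (1/2) * (x+1) ^ ((1:ℝ)/2)) * X ^ (ν+1) := by
        apply mul_le_mul_of_nonneg_right _ (by positivity)
        exact mul_le_mul_of_nonneg_left key1 (by linarith)
    _ = (x+1) * ((Real.exp (1/2) * (x+1) ^ ((1:ℝ)/2) * X) * x ^ (x/2)) * X ^ ν := by
        rw [hXp]; ring
    _ ≤ (x+1) * ((x/2) * x ^ (x/2)) * X ^ ν := by
        apply mul_le_mul_of_nonneg_right _ (by positivity)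
        apply mul_le_mul_of_nonneg_left _ (by linarith)
        exact mul_le_mul_of_nonneg_right key2 (Real.rpow_nonneg (le_of_lt hx0) _)

lemma norm_gterm_le (a : ℕ → ℂ) (ha : ∀ n, ‖a n‖ ≤ n) (j n : ℕ) (z : ℂ) :
    ‖a (n + j) * z ^ n / (n.factorial : ℂ)‖ ≤ ((n : ℝ) + j) * ‖z‖ ^ n / n.factorial := by
  have hfact : (0:ℝ) < (n.factorial : ℝ) := by exact_mod_cast n.factorial_pos
  rw [norm_div, norm_mul, norm_pow]
  have h1 : ‖((n.factorial : ℕ) : ℂ)‖ = (n.factorial : ℝ) := by simp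
  rw [h1]
  gcongr
  have := ha (n + j)
  push_cast at this
  linarith

lemma summable_gterm (a : ℕ → ℂ) (ha : ∀ n, ‖a n‖ ≤ n) (j : ℕ) (z : ℂ) :
    Summable (fun n : ℕ => a (n + j) * z ^ n / (n.factorial : ℂ)) :=
  Summable.of_norm_bounded (sum1 j ‖z‖ (norm_nonneg z)) (fun n => norm_gterm_le a ha j n z)

lemma hasDerivAt_g (a : ℕ → ℂ) (ha : ∀ n, ‖a n‖ ≤ n) (j : ℕ) (z : ℂ) :
    HasDerivAt (fun w : ℂ => ∑' n : ℕ, a (n + j) * w ^ n / (n.factorial : ℂ))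
      (∑' n : ℕ, a (n + (j+1)) * z ^ n / (n.factorial : ℂ)) z := by
  set R : ℝ := ‖z‖ + 1 with hR
  have hR1 : (1:ℝ) ≤ R := by have := norm_nonneg z; linarith
  have hR0 : (0:ℝ) < R := by linarith
  set g : ℕ → ℂ → ℂ := fun n w => a (n + j) * w ^ n / (n.factorial : ℂ) with hg
  set g' : ℕ → ℂ → ℂ := fun n w => a (n + j) * ((n : ℂ) * w ^ (n - 1)) / (n.factorial : ℂ) with hg'
  set u : ℕ → ℝ := fun n => ((n : ℝ) + j) * n * R ^ n / n.factorial with hu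
  have hderiv : ∀ n : ℕ, ∀ w : ℂ, HasDerivAt (g n) (g' n w) w := by
    intro n w
    have h := (hasDerivAt_pow n w).const_mul (a (n + j))
    exact h.div_const _
  have hbound : ∀ n : ℕ, ∀ w : ℂ, w ∈ Metric.ball (0:ℂ) R → ‖g' n w‖ ≤ u n := by
    intro n w hw
    have hwR : ‖w‖ ≤ R := by
      have := mem_ball_iff_norm.mp hw
      simp only [sub_zero] at this
      linarith
    have hfact : (0:ℝ) < (n.factorial : ℝ) := by exact_mod_cast n.factorial_pos
    rw [hg']
    simp only []
    rw [norm_div, norm_mul, norm_mul, norm_pow]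
    have h1 : ‖((n.factorial : ℕ) : ℂ)‖ = (n.factorial : ℝ) := by simp
    have h2 : ‖((n : ℕ) : ℂ)‖ = (n : ℝ) := by simp
    rw [h1, h2, hu]
    have ha' : ‖a (n + j)‖ ≤ (n : ℝ) + j := by
      have := ha (n + j); push_cast at this; linarith
    have hpow : ‖w‖ ^ (n-1) ≤ R ^ n := by
      calc ‖w‖ ^ (n-1) ≤ R ^ (n-1) := by gcongr
        _ ≤ R ^ n := pow_le_pow_right₀ hR1 (Nat.sub_le n 1)
    calc ‖a (n + j)‖ * ((n:ℝ) * ‖w‖ ^ (n-1)) / n.factorial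
        ≤ ((n:ℝ) + j) * ((n:ℝ) * R ^ n) / n.factorial := by
          gcongr
      _ = ((n:ℝ) + j) * n * R ^ n / n.factorial := by ring
  have hu_sum : Summable u := sum2 j R (le_of_lt hR0)
  have hz : z ∈ Metric.ball (0:ℂ) R := by
    rw [mem_ball_iff_norm, sub_zero]; linarith
  have hg0 : Summable fun n => g n z := summable_gterm a ha j z
  have H := hasDerivAt_tsum_of_isPreconnected hu_sum Metric.isOpen_ball
    (convex_ball (0:ℂ) R).isPreconnected (fun n y _ => hderiv n y) hbound hz hg0 hz
  refine H.congr_deriv ?_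
  -- ∑' n, a (n + (j+1)) * z ^ n / n! = ∑' n, g' n z
  have hg'_sum : Summable fun n => g' n z :=
    Summable.of_norm_bounded hu_sum (fun n => hbound n z hz)
  rw [Summable.tsum_eq_zero_add hg'_sum]
  have h0 : g' 0 z = 0 := by simp [hg']
  rw [h0, zero_add]
  apply tsum_congr
  intro n
  rw [hg']
  simp only []
  have hidx : n + 1 + j = n + (j + 1) := by omega
  rw [hidx, Nat.add_sub_cancel, Nat.factorial_succ]
  have hfne : ((n.factorial : ℕ) : ℂ) ≠ 0 := by exact_mod_cast n.factorial_ne_zero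
  have hne : ((n:ℂ) + 1) ≠ 0 := Nat.cast_add_one_ne_zero n
  push_cast
  field_simp

open scoped Classical in
theorem stmt19 (α : ℕ → ℕ) (hαpos : ∀ N, 0 < α N)
    (hsum : ∀ N : ℕ, 1 ≤ N →
      ∑' n : ℕ, ((n + α N : ℕ) : ℝ) ^ (1 + ((n + α N : ℕ) : ℝ) / 2) * (N : ℝ) ^ (n + α N)
          / ((n + α N).factorial : ℝ) < 1 / N)
    (c : ℕ → ℝ) (hc : ∀ n, 0 ≤ c n ∧ c n ≤ n)
    (B : Set ℕ) (hBgap : ∀ N : ℕ, 1 ≤ N → ∀ n ∈ B, ¬ (α N ≤ n ∧ n < 2 * (α N) ^ 2))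
    (f : ℂ → ℂ)
    (hf : ∀ z : ℂ, HasSum (fun n : ℕ =>
      (if n ∈ B then ((c n : ℝ) : ℂ) else 0) * z ^ n / (n.factorial : ℂ)) (f z)) :
    ∀ m : ℕ, ∀ ε : ℝ, 0 < ε → ∃ j₀ : ℕ, ∀ j : ℕ, j₀ ≤ j →
      (∃ N : ℕ, max m ⌈1 / ε⌉₊ ≤ N ∧ α N ≤ j ∧ j ≤ (α N) ^ 2) →
      supD (iteratedDeriv j f) m < ε := by
  -- the coefficient function
  set a : ℕ → ℂ := fun n => if n ∈ B then ((c n : ℝ) : ℂ) else 0 with ha_def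
  have ha : ∀ n, ‖a n‖ ≤ n := by
    intro n
    rw [ha_def]
    by_cases hB : n ∈ B
    · simp only [hB, if_true]
      rw [Complex.norm_real, Real.norm_eq_abs, abs_of_nonneg (hc n).1]
      exact (hc n).2
    · simp [hB]
  -- the derivatives
  set g : ℕ → ℂ → ℂ := fun j z => ∑' n : ℕ, a (n + j) * z ^ n / (n.factorial : ℂ) with hg_def
  have key : ∀ j : ℕ, iteratedDeriv j f = g j := by
    intro j
    induction j with
    | zero =>
      rw [iteratedDeriv_zero]
      funext z
      have := (hf z).tsum_eq
      rw [hg_def]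
      simp only []
      rw [← this]
      exact tsum_congr fun n => by simp only [Nat.add_zero, ha_def]
    | succ j ih =>
      rw [iteratedDeriv_succ, ih]
      funext z
      exact (hasDerivAt_g a ha j z).deriv
  intro m ε hε
  refine ⟨0, fun j _ hN => ?_⟩
  obtain ⟨N, hNmax, hαj, hjα⟩ := hN
  have hmN : m ≤ N := le_trans (le_max_left _ _) hNmax
  have hN1 : 1 ≤ N := le_trans (le_trans (Nat.one_le_ceil_iff.mpr (by positivity)) (le_max_right _ _)) hNmax
  have hN1R : (1:ℝ) ≤ (N:ℝ) := by exact_mod_cast hN1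
  have hN0R : (0:ℝ) < (N:ℝ) := by linarith
  -- the comparison series
  set T : ℕ → ℝ := fun ν => (ν:ℝ) ^ (1 + (ν:ℝ)/2) * (N:ℝ) ^ ν / (ν.factorial : ℝ) with hT_def
  have hT0 : ∀ k, 0 ≤ T k := by
    intro k; rw [hT_def]; positivity
  have hT_sum : Summable T := summable_T (N:ℝ) hN1R
  have hTshift : Summable (fun n => T (n + α N)) := (summable_nat_add_iff (α N)).mpr hT_sum
  set S : ℝ := ∑' n : ℕ, T (n + α N) with hS_def
  have hS : S < 1 / N := hsum N hN1
  have hS0 : 0 ≤ S := tsum_nonneg fun n => hT0 _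
  have hεN : 1 / (N:ℝ) ≤ ε := by
    have h1 : (1/ε : ℝ) ≤ (⌈1/ε⌉₊ : ℝ) := Nat.le_ceil _
    have h2 : ((⌈1/ε⌉₊ : ℕ) : ℝ) ≤ (N:ℝ) := by
      exact_mod_cast le_trans (le_max_right m _) hNmax
    rw [div_le_iff₀ hN0R]
    rw [div_le_iff₀ hε] at h1
    nlinarith
  -- main pointwise bound
  have hbound : ∀ z ∈ Metric.closedBall (0:ℂ) (m:ℝ), ‖g j z‖ ≤ S := by
    intro z hz
    have hzm : ‖z‖ ≤ (m:ℝ) := by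
      rw [Metric.mem_closedBall, dist_eq_norm, sub_zero] at hz
      exact hz
    set F : ℕ → ℝ := fun n => ‖a (n + j) * z ^ n / (n.factorial : ℂ)‖ with hF_def
    have hFs : Summable F :=
      Summable.of_nonneg_of_le (fun n => norm_nonneg _)
        (fun n => norm_gterm_le a ha j n z) (sum1 j ‖z‖ (norm_nonneg z))
    have h1 : ‖g j z‖ ≤ ∑' n, F n := norm_tsum_le_tsum_norm hFs
    have h2 : ∑' n, F n ≤ S := by
      rw [hS_def]
      apply Summable.tsum_le_tsum_of_inj (fun n => n + (j - α N))
        (add_left_injective (j - α N)) (fun k _ => hT0 _) _ hFs hTshift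
      intro n
      have hidx : (n + (j - α N)) + α N = n + j := by omega
      rw [hidx]
      by_cases hB : (n + j) ∈ B
      · -- main estimate
        have hgap := hBgap N hN1 (n + j) hB
        have hν2 : 2 * (α N)^2 ≤ n + j := by
          by_contra h
          exact hgap ⟨le_trans hαj (by omega), by omega⟩
        have hαN1 : 1 ≤ α N := hαpos N
        have hν2' : 2 ≤ n + j := le_trans (by nlinarith) hν2
        have hν1R : (1:ℝ) ≤ ((n+j:ℕ):ℝ) := by exact_mod_cast le_trans one_le_two hν2'
        have hν0R : (0:ℝ) < ((n+j:ℕ):ℝ) := by linarith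
        have hfactn : (0:ℝ) < (n.factorial : ℝ) := by exact_mod_cast n.factorial_pos
        have hfactν : (0:ℝ) < ((n+j).factorial : ℝ) := by exact_mod_cast (n+j).factorial_pos
        -- step A : F n ≤ (n+j) * N^n / n!
        have hA : F n ≤ ((n+j:ℕ):ℝ) * (N:ℝ) ^ n / n.factorial := by
          have := norm_gterm_le a ha j n z
          have hz' : ‖z‖ ^ n ≤ (N:ℝ) ^ n := by
            apply pow_le_pow_left₀ (norm_nonneg z)
            calc ‖z‖ ≤ (m:ℝ) := hzm
              _ ≤ (N:ℝ) := by exact_mod_cast hmN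
          calc F n ≤ ((n:ℝ) + j) * ‖z‖ ^ n / n.factorial := this
            _ ≤ ((n:ℝ) + j) * (N:ℝ) ^ n / n.factorial := by gcongr
            _ = ((n+j:ℕ):ℝ) * (N:ℝ) ^ n / n.factorial := by push_cast; ring
        -- step B : N^n ≤ N^(n+j)
        have hB2 : (N:ℝ) ^ n ≤ (N:ℝ) ^ (n+j) := pow_le_pow_right₀ hN1R (by omega)
        -- step C : factorial estimate : (n+j)! ≤ (n+j)^((n+j)/2 : ℝ) * n!
        have hC : ((n+j).factorial : ℝ) ≤ ((n+j:ℕ):ℝ) ^ (((n+j:ℕ):ℝ)/2) * n.factorial := by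
          have hnat := fact_le_pow_mul_fact n j
          have hcast : ((n+j).factorial : ℝ) ≤ ((n+j:ℕ):ℝ) ^ (j:ℕ) * (n.factorial : ℝ) := by
            exact_mod_cast hnat
          refine le_trans hcast ?_
          apply mul_le_mul_of_nonneg_right _ (le_of_lt hfactn)
          rw [← Real.rpow_natCast ((n+j:ℕ):ℝ) j]
          apply Real.rpow_le_rpow_of_exponent_le hν1R
          have : 2 * j ≤ n + j := by nlinarith
          have : ((2 * j : ℕ):ℝ) ≤ ((n+j:ℕ):ℝ) := by exact_mod_cast this
          push_cast at this ⊢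
          linarith
        -- combine
        have hTν : T (n+j) = ((n+j:ℕ):ℝ) * ((n+j:ℕ):ℝ) ^ (((n+j:ℕ):ℝ)/2) * (N:ℝ)^(n+j)
            / ((n+j).factorial : ℝ) := by
          rw [hT_def]
          simp only []
          rw [Real.rpow_add hν0R, Real.rpow_one]
        rw [hTν]
        calc F n ≤ ((n+j:ℕ):ℝ) * (N:ℝ) ^ n / n.factorial := hA
          _ ≤ ((n+j:ℕ):ℝ) * (N:ℝ) ^ (n+j) / n.factorial := by gcongr
          _ ≤ ((n+j:ℕ):ℝ) * ((n+j:ℕ):ℝ) ^ (((n+j:ℕ):ℝ)/2) * (N:ℝ)^(n+j)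
              / ((n+j).factorial : ℝ) := by
            rw [div_le_div_iff₀ hfactn hfactν]
            calc ((n+j:ℕ):ℝ) * (N:ℝ) ^ (n+j) * ((n+j).factorial : ℝ)
                ≤ ((n+j:ℕ):ℝ) * (N:ℝ) ^ (n+j) * (((n+j:ℕ):ℝ) ^ (((n+j:ℕ):ℝ)/2) * n.factorial) := by
                  apply mul_le_mul_of_nonneg_left hC (by positivity)
              _ = ((n+j:ℕ):ℝ) * ((n+j:ℕ):ℝ) ^ (((n+j:ℕ):ℝ)/2) * (N:ℝ)^(n+j) * (n.factorial:ℝ) := by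
                  ring
      · -- a (n+j) = 0
        have : F n = 0 := by
          rw [hF_def]
          simp only [ha_def, hB, if_false, zero_mul, zero_div, norm_zero]
        rw [this]
        exact hT0 _
    linarith
  -- conclude
  rw [key j]
  have hsup : supD (g j) m ≤ S := by
    apply Real.sSup_le _ hS0
    rintro x ⟨z, hz, rfl⟩
    exact hbound z hz
  calc supD (g j) m ≤ S := hsup
    _ < 1 / N := hS
    _ ≤ ε := hεN
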